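/- Let E = EuclideanSpace ℝ (Fin n), let f : E → E and η, g : E → ℝ all be C² (ContDiff ℝ 2), and suppose the entropy compatibility relation holds: for every u ∈ E and every h ∈ E, ⟪∇η(u), (Df)(u) h⟫ = ⟪∇g(u), h⟫, where Df(u) denotes the Fréchet derivative of f at u. Then for every u the linear map A₀(u)∘Df(u) is symmetric, where A₀(u) := D(∇η)(u) is the Hessian of η; that is, for all h, k ∈ E, ⟪A₀(u)(Df(u) h), k⟫ = ⟪A₀(u)(Df(u) k), h⟫. (This is the symmetrization assertion of the Godunov–Mock theorem.) -/

import Mathlib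

open InnerProductSpace

/-- The inner product against `fderiv ℝ (gradient η) u a` is the second derivative. -/
lemma hess_inner {n : ℕ} (η : EuclideanSpace ℝ (Fin n) → ℝ)
    (u a b : EuclideanSpace ℝ (Fin n)) :
    (inner ℝ (fderiv ℝ (gradient η) u a) b : ℝ) = fderiv ℝ (fderiv ℝ η) u a b := by
  have hgrad : gradient η = (toDual ℝ (EuclideanSpace ℝ (Fin n))).symm ∘ fderiv ℝ η := rfl
  rw [hgrad, LinearIsometryEquiv.comp_fderiv]
  simp only [ContinuousLinearMap.coe_comp', Function.comp_apply,
    LinearIsometryEquiv.coe_toContinuousLinearEquiv]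
  exact toDual_symm_apply

/-- Hessian symmetry for a `C²` function. -/
lemma hess_symm {n : ℕ} (η : EuclideanSpace ℝ (Fin n) → ℝ) (hη : ContDiff ℝ 2 η)
    (u a b : EuclideanSpace ℝ (Fin n)) :
    (inner ℝ (fderiv ℝ (gradient η) u a) b : ℝ) = inner ℝ (fderiv ℝ (gradient η) u b) a := by
  rw [hess_inner, hess_inner]
  exact (hη.contDiffAt.isSymmSndFDerivAt (by simp)) a b

/-- **Godunov–Mock theorem, symmetrization part.**
If `(η, g)` is an entropy pair for the flux component `f`, i.e.
`⟪∇η(u), Df(u) h⟫ = ⟪∇g(u), h⟫` for all `u, h`, then the composition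
`A₀(u) ∘ Df(u)`, where `A₀(u) = D(∇η)(u)` is the Hessian of `η`,
is symmetric with respect to the inner product. -/
theorem godunov_mock_symmetrization {n : ℕ}
    (f : EuclideanSpace ℝ (Fin n) → EuclideanSpace ℝ (Fin n))
    (η g : EuclideanSpace ℝ (Fin n) → ℝ)
    (hf : ContDiff ℝ 2 f) (hη : ContDiff ℝ 2 η) (hg : ContDiff ℝ 2 g)
    (hcompat : ∀ u h : EuclideanSpace ℝ (Fin n),
      (inner ℝ (gradient η u) (fderiv ℝ f u h) : ℝ) = inner ℝ (gradient g u) h) :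
    ∀ u h k : EuclideanSpace ℝ (Fin n),
      (inner ℝ (fderiv ℝ (gradient η) u (fderiv ℝ f u h)) k : ℝ)
        = inner ℝ (fderiv ℝ (gradient η) u (fderiv ℝ f u k)) h := by
  -- differentiability facts
  have hη' : ContDiff ℝ 1 (fderiv ℝ η) := hη.fderiv_right (by norm_num)
  have hg' : ContDiff ℝ 1 (fderiv ℝ g) := hg.fderiv_right (by norm_num)
  have hf' : ContDiff ℝ 1 (fderiv ℝ f) := hf.fderiv_right (by norm_num)
  have hgradη : Differentiable ℝ (gradient η) := by
    have : gradient η = (toDual ℝ (EuclideanSpace ℝ (Fin n))).symm ∘ fderiv ℝ η := rfl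
    rw [this]
    exact (toDual ℝ (EuclideanSpace ℝ (Fin n))).symm.toContinuousLinearEquiv.differentiable.comp
      (hη'.differentiable one_ne_zero)
  have hgradg : Differentiable ℝ (gradient g) := by
    have : gradient g = (toDual ℝ (EuclideanSpace ℝ (Fin n))).symm ∘ fderiv ℝ g := rfl
    rw [this]
    exact (toDual ℝ (EuclideanSpace ℝ (Fin n))).symm.toContinuousLinearEquiv.differentiable.comp
      (hg'.differentiable one_ne_zero)
  -- derivative of `x ↦ fderiv ℝ f x h`
  have hDfh : ∀ (h u : EuclideanSpace ℝ (Fin n)), HasFDerivAt (fun x => fderiv ℝ f x h)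
      ((ContinuousLinearMap.apply ℝ (EuclideanSpace ℝ (Fin n)) h).comp (fderiv ℝ (fderiv ℝ f) u)) u := by
    intro h u
    exact (ContinuousLinearMap.apply ℝ (EuclideanSpace ℝ (Fin n)) h).hasFDerivAt.comp u
      ((hf'.differentiable one_ne_zero u).hasFDerivAt)
  -- differentiate the compatibility relation
  have key : ∀ u h k : EuclideanSpace ℝ (Fin n),
      (inner ℝ (gradient η u) (fderiv ℝ (fderiv ℝ f) u k h) : ℝ)
        + inner ℝ (fderiv ℝ (gradient η) u k) (fderiv ℝ f u h)
      = inner ℝ (fderiv ℝ (gradient g) u k) h := by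
    intro u h k
    have heq : (fun x => (inner ℝ (gradient η x) (fderiv ℝ f x h) : ℝ))
        = fun x => (inner ℝ (gradient g x) (h : EuclideanSpace ℝ (Fin n)) : ℝ) := funext fun x => hcompat x h
    have lhs := fderiv_inner_apply (𝕜 := ℝ) (hgradη u) ((hDfh h u).differentiableAt) k
    have rhs := fderiv_inner_apply (𝕜 := ℝ) (hgradg u) (differentiableAt_const h) k
    rw [heq] at lhs
    rw [lhs] at rhs
    rw [(hDfh h u).fderiv] at rhs
    simpa using rhs
  intro u h k
  have symf : fderiv ℝ (fderiv ℝ f) u k h = fderiv ℝ (fderiv ℝ f) u h k :=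
    (hf.contDiffAt.isSymmSndFDerivAt (by simp)) k h
  have symg : (inner ℝ (fderiv ℝ (gradient g) u k) h : ℝ)
      = inner ℝ (fderiv ℝ (gradient g) u h) k := hess_symm g hg u k h
  have e1 := key u h k
  have e2 := key u k h
  rw [symf, symg] at e1
  have main : (inner ℝ (fderiv ℝ (gradient η) u k) (fderiv ℝ f u h) : ℝ)
      = inner ℝ (fderiv ℝ (gradient η) u h) (fderiv ℝ f u k) := by linarith
  calc (inner ℝ (fderiv ℝ (gradient η) u (fderiv ℝ f u h)) k : ℝ)
      = inner ℝ (fderiv ℝ (gradient η) u k) (fderiv ℝ f u h) := hess_symm η hη u _ _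
    _ = inner ℝ (fderiv ℝ (gradient η) u h) (fderiv ℝ f u k) := main
    _ = inner ℝ (fderiv ℝ (gradient η) u (fderiv ℝ f u k)) h :=
        (hess_symm η hη u _ _).symm
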